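/- Let r, s, k₀, k₁ be nonnegative integers with k₀ ≤ r and k₁ ≤ s. Then N(r,s;k₀,k₁,0,0) = N(r,s;r−k₀, s−k₁, 0, 0); that is, the number of ℤ₂ℤ₈-additive codes of type (r,s;k₀,k₁,0,0) equals the number of codes whose type equals the dual type (r,s;r−k₀,s−k₁,0,0). -/
import Mathlib


open Finset

/-- The Mixed Generalized Gaussian Number `N(α,β;k₀,k₁,k₂,k₃)`. -/
def MGN (a b k₀ k₁ k₂ k₃ : ℕ) : ℚ :=
  ((∏ i ∈ range k₀, ((2 ^ a - 2 ^ i : ℚ) * 2 ^ b)) *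
   (∏ i ∈ range k₁, ((8 ^ b - 4 ^ b * 2 ^ i : ℚ) * 2 ^ a)) *
   (∏ i ∈ range k₂, ((4 ^ b - 2 ^ (b + k₁ + i) : ℚ) * 2 ^ a)) *
   (∏ i ∈ range k₃, (2 ^ b - 2 ^ (k₁ + k₂ + i) : ℚ))) /
  ((∏ i ∈ range k₀, (2 ^ (k₀ + k₁ + k₂ + k₃) - 2 ^ (k₁ + k₂ + k₃ + i) : ℚ)) *
   (∏ i ∈ range k₁, ((8 ^ k₁ - 4 ^ k₁ * 2 ^ i : ℚ) * 2 ^ (k₀ + 2 * k₂ + k₃))) *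
   (∏ i ∈ range k₂, ((4 ^ k₂ - 2 ^ (k₂ + i) : ℚ) * 2 ^ (k₀ + 2 * k₁ + k₃))) *
   (∏ i ∈ range k₃, (2 ^ (k₁ + k₂ + k₃) - 2 ^ (k₁ + k₂ + i) : ℚ)))

/-- `Fq n = ∏_{i<n} (2^(i+1) - 1)`, the "2-factorial" used to express Gaussian binomials. -/
noncomputable def Fq (n : ℕ) : ℚ := ∏ i ∈ range n, ((2:ℚ)^(i+1) - 1)

lemma Fq_pos (n : ℕ) : 0 < Fq n := by
  apply Finset.prod_pos
  intro i _
  have : (2:ℚ)^0 < 2^(i+1) := pow_lt_pow_right₀ one_lt_two (Nat.succ_pos i)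
  simpa using this

lemma key (k n : ℕ) :
    (∏ i ∈ range k, ((2:ℚ)^(k+n) - 2^i)) * Fq n
      = (∏ i ∈ range k, (2:ℚ)^i) * Fq (k+n) := by
  induction k generalizing n with
  | zero => simp
  | succ k ih =>
    have h1 : k + 1 + n = k + (n + 1) := by omega
    rw [prod_range_succ, prod_range_succ, h1]
    have ih' := ih (n + 1)
    have hF : Fq (n+1) = Fq n * ((2:ℚ)^(n+1) - 1) := by
      rw [Fq, Fq, prod_range_succ]
    rw [hF] at ih'
    linear_combination ((2:ℚ)^k) * ih'

lemma P_pos (n k : ℕ) (h : k ≤ n) : 0 < ∏ i ∈ range k, ((2:ℚ)^n - 2^i) := by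
  apply Finset.prod_pos
  intro i hi
  have hi' : i < n := lt_of_lt_of_le (mem_range.mp hi) h
  have : (2:ℚ)^i < 2^n := pow_lt_pow_right₀ one_lt_two hi'
  linarith

lemma mgn_eval (a b k₀ k₁ : ℕ) :
    MGN (k₀+a) (k₁+b) k₀ k₁ 0 0
      = 2^(k₀*b + k₁*a + 2*k₁*b) * Fq (k₀+a) * Fq (k₁+b)
        / (Fq a * Fq k₀ * Fq b * Fq k₁) := by
  rw [MGN]
  simp only [range_zero, prod_empty, mul_one, add_zero, mul_zero]
  -- rewrite the four products
  have e1 : (∏ i ∈ range k₀, ((2 ^ (k₀+a) - 2 ^ i : ℚ) * 2 ^ (k₁+b)))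
      = 2^((k₁+b)*k₀) * ∏ i ∈ range k₀, ((2:ℚ)^(k₀+a) - 2^i) := by
    rw [prod_mul_distrib, prod_const, card_range, ← pow_mul, mul_comm]
  have e2 : (∏ i ∈ range k₁, ((8 ^ (k₁+b) - 4 ^ (k₁+b) * 2 ^ i : ℚ) * 2 ^ (k₀+a)))
      = 2^(2*((k₁+b)*k₁) + (k₀+a)*k₁) * ∏ i ∈ range k₁, ((2:ℚ)^(k₁+b) - 2^i) := by
    have h8 : (8:ℚ)^(k₁+b) = 2^(k₁+b) * 4^(k₁+b) := by
      rw [← mul_pow]; norm_num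
    have h4 : (4:ℚ)^(k₁+b) = 2^(2*(k₁+b)) := by
      rw [pow_mul]; norm_num
    calc (∏ i ∈ range k₁, ((8 ^ (k₁+b) - 4 ^ (k₁+b) * 2 ^ i : ℚ) * 2 ^ (k₀+a)))
        = ∏ i ∈ range k₁, (((2:ℚ)^(k₁+b) - 2^i) * (2^(2*(k₁+b)) * 2^(k₀+a))) := by
          apply prod_congr rfl
          intro i _
          rw [h8, h4]; ring
      _ = (∏ i ∈ range k₁, ((2:ℚ)^(k₁+b) - 2^i)) * (2^(2*(k₁+b)) * 2^(k₀+a))^k₁ := by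
          rw [prod_mul_distrib, prod_const, card_range]
      _ = 2^(2*((k₁+b)*k₁) + (k₀+a)*k₁) * ∏ i ∈ range k₁, ((2:ℚ)^(k₁+b) - 2^i) := by
          rw [← pow_add, ← pow_mul,
            show (2*(k₁+b) + (k₀+a))*k₁ = 2*((k₁+b)*k₁) + (k₀+a)*k₁ from by ring, mul_comm]
  have e3 : (∏ i ∈ range k₀, (2 ^ (k₀ + k₁) - 2 ^ (k₁ + i) : ℚ))
      = 2^(k₁*k₀) * ∏ i ∈ range k₀, ((2:ℚ)^k₀ - 2^i) := by
    calc (∏ i ∈ range k₀, (2 ^ (k₀ + k₁) - 2 ^ (k₁ + i) : ℚ))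
        = ∏ i ∈ range k₀, (((2:ℚ)^k₀ - 2^i) * 2^k₁) := by
          apply prod_congr rfl
          intro i _
          rw [pow_add, pow_add]; ring
      _ = 2^(k₁*k₀) * ∏ i ∈ range k₀, ((2:ℚ)^k₀ - 2^i) := by
          rw [prod_mul_distrib, prod_const, card_range, ← pow_mul, mul_comm]
  have e4 : (∏ i ∈ range k₁, ((8 ^ k₁ - 4 ^ k₁ * 2 ^ i : ℚ) * 2 ^ k₀))
      = 2^(2*(k₁*k₁) + k₀*k₁) * ∏ i ∈ range k₁, ((2:ℚ)^k₁ - 2^i) := by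
    have h8 : (8:ℚ)^k₁ = 2^k₁ * 4^k₁ := by rw [← mul_pow]; norm_num
    have h4 : (4:ℚ)^k₁ = 2^(2*k₁) := by rw [pow_mul]; norm_num
    calc (∏ i ∈ range k₁, ((8 ^ k₁ - 4 ^ k₁ * 2 ^ i : ℚ) * 2 ^ k₀))
        = ∏ i ∈ range k₁, (((2:ℚ)^k₁ - 2^i) * (2^(2*k₁) * 2^k₀)) := by
          apply prod_congr rfl
          intro i _
          rw [h8, h4]; ring
      _ = (∏ i ∈ range k₁, ((2:ℚ)^k₁ - 2^i)) * (2^(2*k₁) * 2^k₀)^k₁ := by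
          rw [prod_mul_distrib, prod_const, card_range]
      _ = 2^(2*(k₁*k₁) + k₀*k₁) * ∏ i ∈ range k₁, ((2:ℚ)^k₁ - 2^i) := by
          rw [← pow_add, ← pow_mul,
            show (2*k₁ + k₀)*k₁ = 2*(k₁*k₁) + k₀*k₁ from by ring, mul_comm]
  rw [e1, e2, e3, e4]
  have K1 := key k₀ a
  have K2 := key k₁ b
  have K3 := key k₀ 0
  have K4 := key k₁ 0
  have Fq0 : Fq 0 = 1 := by simp [Fq]
  simp only [add_zero, Fq0, mul_one] at K3 K4
  have hFa := (Fq_pos a).ne'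
  have hFb := (Fq_pos b).ne'
  have hF0 := (Fq_pos k₀).ne'
  have hF1 := (Fq_pos k₁).ne'
  have hP3 := (P_pos k₀ k₀ le_rfl).ne'
  have hP4 := (P_pos k₁ k₁ le_rfl).ne'
  rw [div_eq_div_iff (by positivity) (by positivity)]
  linear_combination
    (2^(k₀*b + k₁*a + 2*k₁*b + k₁*k₀ + 2*(k₁*k₁) + k₀*k₁) * Fq k₀ * Fq k₁
      * (∏ i ∈ range k₁, ((2:ℚ)^(k₁+b) - 2^i)) * Fq b) * K1
    + (2^(k₀*b + k₁*a + 2*k₁*b + k₁*k₀ + 2*(k₁*k₁) + k₀*k₁) * Fq k₀ * Fq k₁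
      * (∏ i ∈ range k₀, (2:ℚ)^i) * Fq (k₀+a)) * K2
    - (2^(k₀*b + k₁*a + 2*k₁*b + k₁*k₀ + 2*(k₁*k₁) + k₀*k₁) * Fq (k₀+a) * Fq (k₁+b)
      * (∏ i ∈ range k₁, ((2:ℚ)^k₁ - 2^i))) * K3
    - (2^(k₀*b + k₁*a + 2*k₁*b + k₁*k₀ + 2*(k₁*k₁) + k₀*k₁) * Fq (k₀+a) * Fq (k₁+b)
      * (∏ i ∈ range k₀, (2:ℚ)^i) * Fq k₀) * K4

/-- The number of ℤ₂ℤ₈-additive codes of type `(r,s;k₀,k₁,0,0)` equals the number of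
codes of the dual type `(r,s;r-k₀,s-k₁,0,0)`. -/
theorem MGN_dual_type_eq_of_k₂_k₃_zero (r s k₀ k₁ : ℕ) (h₀ : k₀ ≤ r) (h₁ : k₁ ≤ s) :
    MGN r s k₀ k₁ 0 0 = MGN r s (r - k₀) (s - k₁) 0 0 := by
  obtain ⟨a, rfl⟩ := Nat.exists_eq_add_of_le h₀
  obtain ⟨b, rfl⟩ := Nat.exists_eq_add_of_le h₁
  rw [Nat.add_sub_cancel_left, Nat.add_sub_cancel_left, mgn_eval a b k₀ k₁,
    show k₀ + a = a + k₀ from by ring, show k₁ + b = b + k₁ from by ring,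
    mgn_eval k₀ k₁ a b,
    show a*k₁ + b*k₀ + 2*b*k₁ = k₀*b + k₁*a + 2*k₁*b from by ring,
    show a + k₀ = k₀ + a from by ring, show b + k₁ = k₁ + b from by ring]
  ring
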